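/- The group ℤ of integers equipped with the cofinite topology is not almost paratopological; that is, there exists g ∈ ℤ with 0 not in the closure of {g} (indeed any g ≠ 0, since the topology is T1) such that for every neighborhood U of 0 one has g ∈ U + U. -/

import Mathlib

open Topology Pointwise

theorem int_cofinite_not_almostParatopological (t : TopologicalSpace ℤ)
    (ht : ∀ s : Set ℤ, IsOpen[t] s ↔ s = ∅ ∨ (sᶜ : Set ℤ).Finite) :
    ∃ g : ℤ, (0 : ℤ) ∉ closure[t] ({g} : Set ℤ) ∧ ∀ U ∈ @nhds ℤ t 0, g ∈ U + U := by
  refine ⟨1, ?_, ?_⟩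
  · have hclosed : IsClosed[t] ({1} : Set ℤ) := by
      rw [← isOpen_compl_iff]
      rw [ht]
      right
      simp
    rw [hclosed.closure_eq]
    simp
  · intro U hU
    rw [@mem_nhds_iff ℤ t 0 U] at hU
    obtain ⟨V, hVU, hVopen, hV0⟩ := hU
    rcases (ht V).mp hVopen with h | hfin
    · simp [h] at hV0
    · -- find n ∈ V with 1 - n ∈ V
      have hfin2 : ({n : ℤ | n ∉ V ∨ 1 - n ∉ V}).Finite := by
        have h1 : {n : ℤ | n ∉ V ∨ 1 - n ∉ V} ⊆ Vᶜ ∪ (fun n => 1 - n) ⁻¹' Vᶜ := by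
          intro n hn
          rcases hn with h | h
          · exact Or.inl h
          · exact Or.inr h
        refine Set.Finite.subset (Set.Finite.union hfin ?_) h1
        apply Set.Finite.preimage _ hfin
        intro a _ b _ hab
        simp only at hab
        omega
      have hinf : ({n : ℤ | n ∈ V ∧ 1 - n ∈ V}).Nonempty := by
        by_contra h
        rw [Set.not_nonempty_iff_eq_empty] at h
        have huniv : ({n : ℤ | n ∉ V ∨ 1 - n ∉ V}) = Set.univ := by
          ext n
          simp only [Set.mem_setOf_eq, Set.mem_univ, iff_true]
          by_contra hn
          push_neg at hn
          exact Set.eq_empty_iff_forall_notMem.mp h n ⟨hn.1, hn.2⟩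
        rw [huniv] at hfin2
        exact Set.infinite_univ hfin2
      obtain ⟨n, hn1, hn2⟩ := hinf
      exact ⟨n, hVU hn1, 1 - n, hVU hn2, by ring⟩
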